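/- Let I ≥ 1 and D : Fin I → ℝ be nonincreasing (D_1 ≥ D_2 ≥ … ≥ D_I). Let j ∈ {1, …, I} and set b = −(2 + ∑_{i=j}^I D_i) / (I − j + 1). Assume b ≤ −D_j, and assume additionally that −D_{j−1} ≤ b in case j > 1. Then ∑_{i=1}^I max(0, −b − D_i) = 2. -/
import Mathlib


/-- Closed-form Lagrange multiplier (Equation 23): if `D_1 ≥ D_2 ≥ … ≥ D_I` and
`b = -(2 + ∑_{i=j}^I D_i)/(I - j + 1)` lies in `[-D_{j-1}, -D_j]`, then
`∑_{i=1}^I max 0 (-b - D_i) = 2`. -/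
theorem multiplier_closed_form
    (I : ℕ) (hI : 1 ≤ I) (D : ℕ → ℝ)
    (hmono : ∀ i i' : ℕ, 1 ≤ i → i ≤ i' → i' ≤ I → D i' ≤ D i)
    (j : ℕ) (hj1 : 1 ≤ j) (hjI : j ≤ I)
    (b : ℝ) (hb : b = -(2 + ∑ i ∈ Finset.Icc j I, D i) / ((I : ℝ) - (j : ℝ) + 1))
    (hbj : b ≤ -D j)
    (hbj' : 1 < j → -D (j - 1) ≤ b) :
    ∑ i ∈ Finset.Icc 1 I, max 0 (-b - D i) = 2 := by
  have hjR : (j : ℝ) ≤ (I : ℝ) := Nat.cast_le.mpr hjI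
  have hd : (0:ℝ) < (I : ℝ) - (j : ℝ) + 1 := by linarith
  have hbe : -b * ((I : ℝ) - (j : ℝ) + 1) = 2 + ∑ i ∈ Finset.Icc j I, D i := by
    rw [hb]; field_simp
  have hsub : Finset.Icc j I ⊆ Finset.Icc 1 I := by
    intro x hx
    simp only [Finset.mem_Icc] at hx ⊢
    omega
  have hzero : ∀ x ∈ Finset.Icc 1 I, x ∉ Finset.Icc j I → max 0 (-b - D x) = 0 := by
    intro x hx hx'
    simp only [Finset.mem_Icc] at hx hx'
    have hxj : x ≤ j - 1 := by omega
    have hj2 : 1 < j := by omega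
    have h1 : D (j - 1) ≤ D x := hmono x (j - 1) hx.1 hxj (by omega)
    have h2 : -D (j - 1) ≤ b := hbj' hj2
    exact max_eq_left (by linarith)
  rw [← Finset.sum_subset hsub hzero]
  have hpos : ∀ i ∈ Finset.Icc j I, max 0 (-b - D i) = -b - D i := by
    intro i hi
    simp only [Finset.mem_Icc] at hi
    have : D i ≤ D j := hmono j i hj1 hi.1 hi.2
    exact max_eq_right (by linarith)
  rw [Finset.sum_congr rfl hpos, Finset.sum_sub_distrib, Finset.sum_const,
    Nat.card_Icc, nsmul_eq_mul]
  have hcast : ((I + 1 - j : ℕ) : ℝ) = (I : ℝ) - (j : ℝ) + 1 := by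
    have : j ≤ I + 1 := by omega
    push_cast [this]
    ring
  rw [hcast]
  linarith [hbe]
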